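/- arXiv:2511.20876 — 2 statements merged into one kernel-verified Lean document; each statement's English description precedes it below -/
import Mathlib

section
/- If (Z₁, Z₂) is bivariate Gaussian with standard normal marginals and correlation r, then Kendall's tau between Z₁ and Z₂ satisfies τ = (2/π)·arcsin(r). -/
open MeasureTheory ProbabilityTheory Real Set Filter

noncomputable section
open MeasureTheory ProbabilityTheory Real Set Filter
noncomputable section
namespace KT

abbrev g : Measure ℝ := gaussianReal 0 1

def D : ℝ × ℝ → ENNReal := fun p => gaussianPDF 0 1 p.1 * gaussianPDF 0 1 p.2

lemma measurable_D : Measurable D :=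
  ((measurable_gaussianPDF 0 1).comp measurable_fst).mul
    ((measurable_gaussianPDF 0 1).comp measurable_snd)

lemma L0 : g.prod g = (volume : Measure (ℝ × ℝ)).withDensity D := by
  refine Measure.prod_eq fun s t hs ht => ?_
  rw [withDensity_apply _ (hs.prod ht), Measure.volume_eq_prod, ← Measure.prod_restrict]
  simp only [D]
  rw [lintegral_prod_mul ((measurable_gaussianPDF 0 1).aemeasurable)
      ((measurable_gaussianPDF 0 1).aemeasurable)]
  rw [show g s = ∫⁻ x in s, gaussianPDF 0 1 x from gaussianReal_apply 0 one_ne_zero s,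
    show g t = ∫⁻ x in t, gaussianPDF 0 1 x from gaussianReal_apply 0 one_ne_zero t]

def R : ℝ × ℝ → ℝ × ℝ := fun p => ((p.1 - p.2) / Real.sqrt 2, (p.1 + p.2) / Real.sqrt 2)

lemma sqrt2_sq : Real.sqrt 2 * Real.sqrt 2 = 2 := Real.mul_self_sqrt (by norm_num)

def Rclm : ℝ × ℝ →L[ℝ] ℝ × ℝ :=
  LinearMap.toContinuousLinearMap (Matrix.toLin (Module.Basis.finTwoProd ℝ) (Module.Basis.finTwoProd ℝ)
    !![(Real.sqrt 2)⁻¹, -(Real.sqrt 2)⁻¹; (Real.sqrt 2)⁻¹, (Real.sqrt 2)⁻¹])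

lemma Rclm_apply (p : ℝ × ℝ) : Rclm p = R p := by
  rw [Rclm, Matrix.toLin_finTwoProd_toContinuousLinearMap]
  simp [R]
  constructor <;> ring

lemma Rclm_det : Rclm.det = 1 := by
  have h : Rclm.det = LinearMap.det
      (Matrix.toLin (Module.Basis.finTwoProd ℝ) (Module.Basis.finTwoProd ℝ)
        !![(Real.sqrt 2)⁻¹, -(Real.sqrt 2)⁻¹; (Real.sqrt 2)⁻¹, (Real.sqrt 2)⁻¹]) := rfl
  rw [h, LinearMap.det_toLin, Matrix.det_fin_two_of]
  have : Real.sqrt 2 * Real.sqrt 2 = 2 := Real.mul_self_sqrt (by norm_num)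
  field_simp
  rw [Real.sq_sqrt (by norm_num : (0:ℝ) ≤ 2)]; norm_num

lemma R_hasFDerivAt (p : ℝ × ℝ) : HasFDerivAt R Rclm p :=
  Rclm.hasFDerivAt.congr_of_eventuallyEq
    (Filter.Eventually.of_forall fun q => (Rclm_apply q).symm)

lemma measurable_R : Measurable R := by
  unfold R; fun_prop

lemma R_bij : Function.Bijective R := by
  have h1 : Function.LeftInverse (fun q : ℝ × ℝ => ((q.1 + q.2) / Real.sqrt 2,
      (q.2 - q.1) / Real.sqrt 2)) R := by
    rintro ⟨a, b⟩
    simp only [R, Prod.mk.injEq]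
    constructor <;> field_simp <;> rw [Real.sq_sqrt (by norm_num : (0:ℝ) ≤ 2)] <;> ring
  have h2 : Function.RightInverse (fun q : ℝ × ℝ => ((q.1 + q.2) / Real.sqrt 2,
      (q.2 - q.1) / Real.sqrt 2)) R := by
    rintro ⟨a, b⟩
    simp only [R, Prod.mk.injEq]
    constructor <;> field_simp <;> rw [Real.sq_sqrt (by norm_num : (0:ℝ) ≤ 2)] <;> ring
  exact Function.bijective_iff_has_inverse.mpr ⟨_, h1, h2⟩

lemma pdf_prod_eq (x y : ℝ) : gaussianPDFReal 0 1 x * gaussianPDFReal 0 1 y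
    = (2 * π)⁻¹ * Real.exp (-(x ^ 2 + y ^ 2) / 2) := by
  have h2π : (0:ℝ) ≤ 2 * π := by positivity
  simp only [gaussianPDFReal, NNReal.coe_one, mul_one, sub_zero]
  have : (Real.sqrt (2 * π))⁻¹ * Real.exp (-x ^ 2 / 2) * ((Real.sqrt (2 * π))⁻¹
      * Real.exp (-y ^ 2 / 2)) = (Real.sqrt (2 * π) * Real.sqrt (2 * π))⁻¹
      * (Real.exp (-x ^ 2 / 2) * Real.exp (-y ^ 2 / 2)) := by
    rw [mul_inv]; ring
  rw [this, Real.mul_self_sqrt h2π, ← Real.exp_add]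
  congr 1
  ring

lemma D_comp_R (p : ℝ × ℝ) : D (R p) = D p := by
  have h : ∀ a b : ℝ, (ENNReal.ofReal (gaussianPDFReal 0 1 a)) *
      (ENNReal.ofReal (gaussianPDFReal 0 1 b))
      = ENNReal.ofReal (gaussianPDFReal 0 1 a * gaussianPDFReal 0 1 b) :=
    fun a b => (ENNReal.ofReal_mul (gaussianPDFReal_nonneg 0 1 a)).symm
  simp only [D, gaussianPDF, h, pdf_prod_eq]
  congr 2
  simp only [R, div_pow]
  rw [Real.sq_sqrt (by norm_num : (0:ℝ) ≤ 2)]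
  ring

lemma L1 : (g.prod g).map R = g.prod g := by
  rw [L0]
  ext S hS
  rw [Measure.map_apply measurable_R hS, withDensity_apply _ (measurable_R hS),
    withDensity_apply _ hS]
  have him : R '' (R ⁻¹' S) = S := Set.image_preimage_eq S R_bij.surjective
  conv_rhs => rw [← him]
  rw [lintegral_image_eq_lintegral_abs_det_fderiv_mul volume (measurable_R hS)
    (fun x _ => (R_hasFDerivAt x).hasFDerivWithinAt) (R_bij.injective.injOn) D]
  simp [Rclm_det, D_comp_R]


lemma neg_eq_RR (p : ℝ × ℝ) : R (R p) = (-p.2, p.1) := by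
  simp only [R, Prod.mk.injEq]
  constructor <;> field_simp <;> rw [Real.sq_sqrt (by norm_num : (0:ℝ) ≤ 2)] <;> ring

lemma Lneg : (g.prod g).map (fun p : ℝ × ℝ => (-p.1, -p.2)) = g.prod g := by
  have h : (fun p : ℝ × ℝ => (-p.1, -p.2)) = (R ∘ R) ∘ (R ∘ R) := by
    funext p
    simp only [Function.comp_apply, neg_eq_RR]
  have k1 : (g.prod g).map (R ∘ R) = g.prod g := by
    rw [← Measure.map_map measurable_R measurable_R, L1, L1]
  rw [h, ← Measure.map_map (measurable_R.comp measurable_R)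
    (measurable_R.comp measurable_R), k1, k1]

lemma sub_law : (g.prod g).map (fun q : ℝ × ℝ => q.1 - q.2)
    = g.map (fun x => Real.sqrt 2 * x) := by
  have h : (fun q : ℝ × ℝ => q.1 - q.2)
      = (fun x : ℝ => Real.sqrt 2 * x) ∘ Prod.fst ∘ R := by
    funext q
    simp only [Function.comp_apply, R]
    field_simp
  rw [h, ← Function.comp_assoc, ← Measure.map_map (by fun_prop) measurable_R, L1,
    ← Measure.map_map (by fun_prop) measurable_fst, Measure.map_fst_prod]
  simp

def e₀ : (ℝ × ℝ) × (ℝ × ℝ) → (ℝ × ℝ) × (ℝ × ℝ) := fun q => ((q.1.1, q.2.1), (q.1.2, q.2.2))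

lemma measurable_e₀ : Measurable e₀ := by unfold e₀; fun_prop

lemma shuffle_mp : MeasurePreserving e₀ ((g.prod g).prod (g.prod g))
    ((g.prod g).prod (g.prod g)) := by
  have h1 := measurePreserving_prodAssoc g g (g.prod g)
  have h2 := (MeasurePreserving.id g).prod
    ((measurePreserving_prodAssoc g g g).symm (MeasurableEquiv.prodAssoc))
  have h3 := (MeasurePreserving.id g).prod
    ((Measure.measurePreserving_swap (μ := g) (ν := g)).prod (MeasurePreserving.id g))
  have h4 := (MeasurePreserving.id g).prod (measurePreserving_prodAssoc g g g)
  have h5 := (measurePreserving_prodAssoc g g (g.prod g)).symm MeasurableEquiv.prodAssoc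
  have total := h5.comp (h4.comp (h3.comp (h2.comp h1)))
  have heq : (⇑MeasurableEquiv.prodAssoc.symm ∘ (Prod.map id ⇑MeasurableEquiv.prodAssoc ∘
      (Prod.map id (Prod.map Prod.swap id) ∘ (Prod.map id ⇑MeasurableEquiv.prodAssoc.symm ∘
        ⇑MeasurableEquiv.prodAssoc)))) = e₀ := by
    funext q
    rfl
  rwa [heq] at total


lemma V_law {Ω : Type*} [MeasurableSpace Ω] (μ : Measure Ω) [IsProbabilityMeasure μ]
    (Z W : Ω → ℝ) (hZm : Measurable Z) (hWm : Measurable W)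
    (hZ : Measure.map Z μ = gaussianReal 0 1) (hW : Measure.map W μ = gaussianReal 0 1)
    (hindep : IndepFun Z W μ) :
    (μ.prod μ).map (fun p : Ω × Ω => (Z p.1 - Z p.2, W p.1 - W p.2))
      = (g.prod g).map (Prod.map (fun x => Real.sqrt 2 * x) (fun x => Real.sqrt 2 * x)) := by
  have hpair : μ.map (fun ω => (Z ω, W ω)) = g.prod g := by
    rw [(indepFun_iff_map_prod_eq_prod_map_map hZm.aemeasurable hWm.aemeasurable).mp hindep,
      hZ, hW]
  have hT : (μ.prod μ).map (Prod.map (fun ω => (Z ω, W ω)) (fun ω => (Z ω, W ω)))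
      = (g.prod g).prod (g.prod g) := by
    rw [← Measure.map_prod_map _ _ (hZm.prodMk hWm) (hZm.prodMk hWm), hpair]
  have hS : (μ.prod μ).map (fun p : Ω × Ω => ((Z p.1, Z p.2), (W p.1, W p.2)))
      = (g.prod g).prod (g.prod g) := by
    have h : (fun p : Ω × Ω => ((Z p.1, Z p.2), (W p.1, W p.2)))
        = e₀ ∘ (Prod.map (fun ω => (Z ω, W ω)) (fun ω => (Z ω, W ω))) := rfl
    rw [h, ← Measure.map_map measurable_e₀ ((hZm.prodMk hWm).prodMap (hZm.prodMk hWm)),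
      hT, shuffle_mp.map_eq]
  have h2 : (fun p : Ω × Ω => (Z p.1 - Z p.2, W p.1 - W p.2))
      = (Prod.map (fun q : ℝ × ℝ => q.1 - q.2) (fun q : ℝ × ℝ => q.1 - q.2))
        ∘ (fun p : Ω × Ω => ((Z p.1, Z p.2), (W p.1, W p.2))) := rfl
  have hsubm : Measurable (fun q : ℝ × ℝ => q.1 - q.2) := by fun_prop
  have hm : Measurable (fun p : Ω × Ω => ((Z p.1, Z p.2), (W p.1, W p.2))) := by fun_prop
  rw [h2, ← Measure.map_map (hsubm.prodMap hsubm) hm, hS,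
    ← Measure.map_prod_map _ _ hsubm hsubm, sub_law,
    Measure.map_prod_map _ _ (by fun_prop) (by fun_prop)]

lemma integral_rho : ∫ x in Ioi (0:ℝ), x * Real.exp (-x^2/2) = 1 := by
  have hd : ∀ x ∈ Ici (0:ℝ), HasDerivAt (fun y : ℝ => -Real.exp (-y^2/2))
      (x * Real.exp (-x^2/2)) x := by
    intro x _
    have h1 : HasDerivAt (fun y : ℝ => -y^2/2) (-x) x := by
      have h := ((hasDerivAt_pow 2 x).neg).div_const 2
      refine h.congr_deriv ?_
      push_cast
      ring
    have h2 := (h1.exp).neg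
    refine h2.congr_deriv ?_
    ring
  have hint : IntegrableOn (fun x : ℝ => x * Real.exp (-x^2/2)) (Ioi 0) := by
    have h := integrable_mul_exp_neg_mul_sq (b := (1:ℝ)/2) (by norm_num)
    have h2 : (fun x : ℝ => x * Real.exp (-(1/2) * x^2)) = fun x : ℝ => x * Real.exp (-x^2/2) := by
      funext x; congr 1; ring_nf
    rw [h2] at h
    exact h.integrableOn
  have htend : Tendsto (fun y : ℝ => -Real.exp (-y^2/2)) atTop (nhds 0) := by
    have h1 : Tendsto (fun y : ℝ => -y^2/2) atTop atBot := by
      have h0 : Tendsto (fun y : ℝ => y^2) atTop atTop := tendsto_pow_atTop two_ne_zero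
      exact (tendsto_neg_atTop_atBot.comp h0).atBot_div_const (by norm_num)
    have := (Real.tendsto_exp_atBot.comp h1).neg
    simpa using this
  have := integral_Ioi_of_hasDerivAt_of_tendsto' hd hint htend
  rw [this]
  norm_num


lemma sector_toReal (A : Set (ℝ × ℝ)) (hA : MeasurableSet A) (a b : ℝ)
    (ha : -π ≤ a) (hb : b ≤ π) (hab : a ≤ b)
    (h : ∀ ρ θ : ℝ, 0 < ρ → θ ∈ Ioo (-π) π →
      ((ρ * Real.cos θ, ρ * Real.sin θ) ∈ A ↔ θ ∈ Ioo a b)) :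
    ((g.prod g) A).toReal = (b - a) / (2 * π) := by
  set f : ℝ × ℝ → ℝ :=
    fun p => A.indicator (fun _ => (1:ℝ)) p * ((2 * π)⁻¹ * Real.exp (-(p.1^2 + p.2^2) / 2))
    with hf
  have hmeas : Measurable f := ((measurable_one.indicator hA)).mul (by fun_prop)
  have h1 : (g.prod g) A = ∫⁻ p, ENNReal.ofReal (f p) := by
    rw [L0, withDensity_apply _ hA, ← lintegral_indicator hA]
    congr 1
    funext p
    by_cases hp : p ∈ A
    · rw [indicator_of_mem hp]
      simp only [f, indicator_of_mem hp, one_mul, D, gaussianPDF]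
      rw [← ENNReal.ofReal_mul (gaussianPDFReal_nonneg 0 1 p.1), pdf_prod_eq]
    · simp [f, indicator_of_notMem hp]
  have hnn : 0 ≤ᵐ[volume (α := ℝ × ℝ)] f := by
    refine Eventually.of_forall fun p => ?_
    apply mul_nonneg
    · exact indicator_nonneg (fun _ _ => zero_le_one) p
    · positivity
  have h2 : ((g.prod g) A).toReal = ∫ p, f p := by
    rw [h1, integral_eq_lintegral_of_nonneg_ae hnn hmeas.aestronglyMeasurable]
  rw [h2, ← integral_comp_polarCoord_symm f]
  have htarget : polarCoord.target = Ioi (0:ℝ) ×ˢ Ioo (-π) π := rfl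
  have hcongr : EqOn (fun p : ℝ × ℝ => p.1 • f (polarCoord.symm p))
      (fun p : ℝ × ℝ => (p.1 * ((2 * π)⁻¹ * Real.exp (-p.1^2 / 2)))
        * (Ioo a b).indicator (fun _ => (1:ℝ)) p.2) polarCoord.target := by
    rintro ⟨ρ, θ⟩ hp
    rw [htarget] at hp
    obtain ⟨hρ, hθ⟩ := hp
    have hsymm : polarCoord.symm (ρ, θ) = (ρ * Real.cos θ, ρ * Real.sin θ) := rfl
    have hsq : (ρ * Real.cos θ)^2 + (ρ * Real.sin θ)^2 = ρ^2 := by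
      nlinarith [Real.sin_sq_add_cos_sq θ]
    have hind : A.indicator (fun _ => (1:ℝ)) (ρ * Real.cos θ, ρ * Real.sin θ)
        = (Ioo a b).indicator (fun _ => (1:ℝ)) θ := by
      by_cases hmem : θ ∈ Ioo a b
      · rw [indicator_of_mem hmem, indicator_of_mem ((h ρ θ hρ hθ).mpr hmem)]
      · rw [indicator_of_notMem hmem,
          indicator_of_notMem (fun hc => hmem ((h ρ θ hρ hθ).mp hc))]
    simp only [hsymm, f, hsq, hind, smul_eq_mul]
    ring
  rw [setIntegral_congr_fun (htarget ▸ measurableSet_Ioi.prod measurableSet_Ioo) hcongr, htarget,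
    Measure.volume_eq_prod,
    setIntegral_prod_mul (μ := (volume : Measure ℝ)) (ν := (volume : Measure ℝ))
      (fun x : ℝ => x * ((2 * π)⁻¹ * Real.exp (-x^2 / 2)))
      (fun θ : ℝ => (Ioo a b).indicator (fun _ => (1:ℝ)) θ) (Ioi 0) (Ioo (-π) π)]
  have hleft : (fun x : ℝ => x * ((2 * π)⁻¹ * Real.exp (-x^2 / 2)))
      = fun x : ℝ => (2 * π)⁻¹ * (x * Real.exp (-x^2 / 2)) := by
    funext x; ring
  rw [hleft, integral_const_mul, integral_rho, mul_one]
  have hsub : Ioo a b ⊆ Ioo (-π) π := Ioo_subset_Ioo ha hb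
  rw [setIntegral_indicator measurableSet_Ioo, inter_eq_self_of_subset_right hsub,
    setIntegral_const, Real.volume_real_Ioo, smul_eq_mul, mul_one,
    max_eq_left (by linarith)]
  ring


lemma angle_iff_pos {r : ℝ} (hr : r ∈ Icc (-1:ℝ) 1) {θ : ℝ} (hθ : θ ∈ Ioo (-π) π) :
    (0 < Real.cos θ ∧ 0 < r * Real.cos θ + Real.sqrt (1 - r^2) * Real.sin θ) ↔
      θ ∈ Ioo (-(Real.arcsin r)) (π/2) := by
  set α := Real.arcsin r with hαdef
  have hα1 : -(π/2) ≤ α := Real.neg_pi_div_two_le_arcsin r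
  have hα2 : α ≤ π/2 := Real.arcsin_le_pi_div_two r
  have hsin : Real.sin α = r := Real.sin_arcsin hr.1 hr.2
  have hcos : Real.cos α = Real.sqrt (1 - r^2) := Real.cos_arcsin r
  have hkey : r * Real.cos θ + Real.sqrt (1 - r^2) * Real.sin θ = Real.sin (α + θ) := by
    rw [Real.sin_add, hsin, hcos]
  have hpi := Real.pi_pos
  constructor
  · rintro ⟨h1, h2⟩
    rw [hkey] at h2
    have hθ2 : θ < π/2 := by
      by_contra hle; push_neg at hle
      have : Real.cos θ ≤ 0 :=
        Real.cos_nonpos_of_pi_div_two_le_of_le hle (by linarith [hθ.2])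
      linarith
    have hθ1 : -(π/2) < θ := by
      by_contra hle; push_neg at hle
      have h3 : Real.cos (-θ) ≤ 0 :=
        Real.cos_nonpos_of_pi_div_two_le_of_le (by linarith) (by linarith [hθ.1])
      rw [Real.cos_neg] at h3; linarith
    refine ⟨?_, hθ2⟩
    by_contra hle; push_neg at hle
    have := Real.sin_nonpos_of_nonpos_of_neg_pi_le (x := α + θ) (by linarith) (by linarith)
    linarith
  · rintro ⟨h1, h2⟩
    have hθ1 : -(π/2) < θ := by simp only [mem_Ioo] at *; linarith
    refine ⟨Real.cos_pos_of_mem_Ioo ⟨hθ1, h2⟩, ?_⟩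
    rw [hkey]
    exact Real.sin_pos_of_pos_of_lt_pi (by linarith) (by linarith)

lemma angle_iff_neg {r : ℝ} (hr : r ∈ Icc (-1:ℝ) 1) {θ : ℝ} (hθ : θ ∈ Ioo (-π) π) :
    (0 < Real.cos θ ∧ r * Real.cos θ + Real.sqrt (1 - r^2) * Real.sin θ < 0) ↔
      θ ∈ Ioo (-(π/2)) (-(Real.arcsin r)) := by
  set α := Real.arcsin r with hαdef
  have hα1 : -(π/2) ≤ α := Real.neg_pi_div_two_le_arcsin r
  have hα2 : α ≤ π/2 := Real.arcsin_le_pi_div_two r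
  have hsin : Real.sin α = r := Real.sin_arcsin hr.1 hr.2
  have hcos : Real.cos α = Real.sqrt (1 - r^2) := Real.cos_arcsin r
  have hkey : r * Real.cos θ + Real.sqrt (1 - r^2) * Real.sin θ = Real.sin (α + θ) := by
    rw [Real.sin_add, hsin, hcos]
  have hpi := Real.pi_pos
  constructor
  · rintro ⟨h1, h2⟩
    rw [hkey] at h2
    have hθ2 : θ < π/2 := by
      by_contra hle; push_neg at hle
      have : Real.cos θ ≤ 0 :=
        Real.cos_nonpos_of_pi_div_two_le_of_le hle (by linarith [hθ.2])
      linarith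
    have hθ1 : -(π/2) < θ := by
      by_contra hle; push_neg at hle
      have h3 : Real.cos (-θ) ≤ 0 :=
        Real.cos_nonpos_of_pi_div_two_le_of_le (by linarith) (by linarith [hθ.1])
      rw [Real.cos_neg] at h3; linarith
    refine ⟨hθ1, ?_⟩
    by_contra hle; push_neg at hle
    have := Real.sin_nonneg_of_nonneg_of_le_pi (x := α + θ) (by linarith) (by linarith)
    linarith
  · rintro ⟨h1, h2⟩
    refine ⟨Real.cos_pos_of_mem_Ioo ⟨h1, by linarith⟩, ?_⟩
    rw [hkey]
    exact Real.sin_neg_of_neg_of_neg_pi_lt (by linarith) (by linarith)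

end KT

open KT

lemma pos_mul_pos_iff {c x : ℝ} (hc : 0 < c) : 0 < c * x ↔ 0 < x := by
  constructor <;> intro h <;> nlinarith

lemma pos_mul_neg_iff {c x : ℝ} (hc : 0 < c) : c * x < 0 ↔ x < 0 := by
  constructor <;> intro h <;> nlinarith

/-- Kendall's tau for the bivariate Gaussian: if `(Z₁, Z₂)` is a centered
Gaussian pair with standard normal marginals and correlation `r` (realized as
`Z₂ = r·Z₁ + √(1-r²)·W` with `Z₁, W` independent standard normals), then
`τ = P((Z₁-Z₁')(Z₂-Z₂') > 0) - P((Z₁-Z₁')(Z₂-Z₂') < 0) = (2/π)·arcsin r`,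
where `(Z₁', Z₂')` is an independent copy (realized on the product space). -/
theorem kendall_tau_gaussian
    {Ω : Type*} [MeasurableSpace Ω] (μ : Measure Ω) [IsProbabilityMeasure μ]
    (Z W : Ω → ℝ) (hZmeas : Measurable Z) (hWmeas : Measurable W)
    (hZ : Measure.map Z μ = gaussianReal 0 1)
    (hW : Measure.map W μ = gaussianReal 0 1)
    (hindep : IndepFun Z W μ)
    (r : ℝ) (hr : r ∈ Set.Icc (-1 : ℝ) 1) :
    ((μ.prod μ) {p | 0 < (Z p.1 - Z p.2) *
        ((r * Z p.1 + Real.sqrt (1 - r^2) * W p.1)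
          - (r * Z p.2 + Real.sqrt (1 - r^2) * W p.2))}).toReal
    - ((μ.prod μ) {p | (Z p.1 - Z p.2) *
        ((r * Z p.1 + Real.sqrt (1 - r^2) * W p.1)
          - (r * Z p.2 + Real.sqrt (1 - r^2) * W p.2)) < 0}).toReal
    = (2 / Real.pi) * Real.arcsin r := by
  have hpi := Real.pi_pos
  set s : ℝ := Real.sqrt (1 - r^2) with hs
  set α : ℝ := Real.arcsin r with hα
  have hα1 : -(π/2) ≤ α := Real.neg_pi_div_two_le_arcsin r
  have hα2 : α ≤ π/2 := Real.arcsin_le_pi_div_two r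
  set V : Ω × Ω → ℝ × ℝ := fun p => (Z p.1 - Z p.2, W p.1 - W p.2) with hV
  have hVm : Measurable V := by
    apply Measurable.prodMk <;> fun_prop
  set Cp : Set (ℝ × ℝ) := {q | 0 < q.1 * (r * q.1 + s * q.2)} with hCp
  set Cm : Set (ℝ × ℝ) := {q | q.1 * (r * q.1 + s * q.2) < 0} with hCm
  have hCpm : MeasurableSet Cp := measurableSet_lt measurable_const (by fun_prop)
  have hCmm : MeasurableSet Cm := measurableSet_lt (by fun_prop) measurable_const
  set Ap : Set (ℝ × ℝ) := {q | 0 < q.1 ∧ 0 < r * q.1 + s * q.2} with hAp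
  set Am : Set (ℝ × ℝ) := {q | 0 < q.1 ∧ r * q.1 + s * q.2 < 0} with hAm
  set Np : Set (ℝ × ℝ) := {q | q.1 < 0 ∧ r * q.1 + s * q.2 < 0} with hNp
  set Nm : Set (ℝ × ℝ) := {q | q.1 < 0 ∧ 0 < r * q.1 + s * q.2} with hNm
  have hlin : Measurable (fun q : ℝ × ℝ => r * q.1 + s * q.2) := by fun_prop
  have hApm : MeasurableSet Ap := by
    rw [hAp, setOf_and]
    exact (measurableSet_lt measurable_const measurable_fst).inter
      (measurableSet_lt measurable_const hlin)
  have hAmm : MeasurableSet Am := by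
    rw [hAm, setOf_and]
    exact (measurableSet_lt measurable_const measurable_fst).inter
      (measurableSet_lt hlin measurable_const)
  have hNpm : MeasurableSet Np := by
    rw [hNp, setOf_and]
    exact (measurableSet_lt measurable_fst measurable_const).inter
      (measurableSet_lt hlin measurable_const)
  have hNmm : MeasurableSet Nm := by
    rw [hNm, setOf_and]
    exact (measurableSet_lt measurable_fst measurable_const).inter
      (measurableSet_lt measurable_const hlin)
  -- the events are preimages
  have hset1 : {p : Ω × Ω | 0 < (Z p.1 - Z p.2) *
      ((r * Z p.1 + Real.sqrt (1 - r^2) * W p.1)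
        - (r * Z p.2 + Real.sqrt (1 - r^2) * W p.2))} = V ⁻¹' Cp := by
    ext p
    simp only [mem_setOf_eq, mem_preimage, hCp, hV]
    rw [show (Z p.1 - Z p.2) * ((r * Z p.1 + s * W p.1) - (r * Z p.2 + s * W p.2))
      = (Z p.1 - Z p.2) * (r * (Z p.1 - Z p.2) + s * (W p.1 - W p.2)) from by ring]
  have hset2 : {p : Ω × Ω | (Z p.1 - Z p.2) *
      ((r * Z p.1 + Real.sqrt (1 - r^2) * W p.1)
        - (r * Z p.2 + Real.sqrt (1 - r^2) * W p.2)) < 0} = V ⁻¹' Cm := by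
    ext p
    simp only [mem_setOf_eq, mem_preimage, hCm, hV]
    rw [show (Z p.1 - Z p.2) * ((r * Z p.1 + s * W p.1) - (r * Z p.2 + s * W p.2))
      = (Z p.1 - Z p.2) * (r * (Z p.1 - Z p.2) + s * (W p.1 - W p.2)) from by ring]
  -- push forward
  have hlaw := V_law μ Z W hZmeas hWmeas hZ hW hindep
  have hm2 : Measurable (Prod.map (fun x : ℝ => Real.sqrt 2 * x)
      (fun x : ℝ => Real.sqrt 2 * x)) := by fun_prop
  have hpreCp : (Prod.map (fun x : ℝ => Real.sqrt 2 * x)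
      (fun x : ℝ => Real.sqrt 2 * x)) ⁻¹' Cp = Cp := by
    ext q
    simp only [mem_preimage, Prod.map_fst, Prod.map_snd, hCp, mem_setOf_eq]
    rw [show (Real.sqrt 2 * q.1) * (r * (Real.sqrt 2 * q.1) + s * (Real.sqrt 2 * q.2))
      = (Real.sqrt 2 * Real.sqrt 2) * (q.1 * (r * q.1 + s * q.2)) from by ring, sqrt2_sq]
    exact pos_mul_pos_iff two_pos
  have hpreCm : (Prod.map (fun x : ℝ => Real.sqrt 2 * x)
      (fun x : ℝ => Real.sqrt 2 * x)) ⁻¹' Cm = Cm := by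
    ext q
    simp only [mem_preimage, Prod.map_fst, Prod.map_snd, hCm, mem_setOf_eq]
    rw [show (Real.sqrt 2 * q.1) * (r * (Real.sqrt 2 * q.1) + s * (Real.sqrt 2 * q.2))
      = (Real.sqrt 2 * Real.sqrt 2) * (q.1 * (r * q.1 + s * q.2)) from by ring, sqrt2_sq]
    exact pos_mul_neg_iff two_pos
  have hmeasCp : (μ.prod μ) (V ⁻¹' Cp) = (g.prod g) Cp := by
    rw [← Measure.map_apply hVm hCpm, hlaw, Measure.map_apply hm2 hCpm, hpreCp]
  have hmeasCm : (μ.prod μ) (V ⁻¹' Cm) = (g.prod g) Cm := by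
    rw [← Measure.map_apply hVm hCmm, hlaw, Measure.map_apply hm2 hCmm, hpreCm]
  -- split into sectors
  have hnegm : Measurable (fun p : ℝ × ℝ => (-p.1, -p.2)) := by fun_prop
  have hNp' : (fun p : ℝ × ℝ => (-p.1, -p.2)) ⁻¹' Ap = Np := by
    ext q
    simp only [mem_preimage, hAp, hNp, mem_setOf_eq]
    constructor <;> rintro ⟨h1, h2⟩ <;> constructor <;> linarith
  have hNm' : (fun p : ℝ × ℝ => (-p.1, -p.2)) ⁻¹' Am = Nm := by
    ext q
    simp only [mem_preimage, hAm, hNm, mem_setOf_eq]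
    constructor <;> rintro ⟨h1, h2⟩ <;> constructor <;> linarith
  have hNpmeas : (g.prod g) Np = (g.prod g) Ap := by
    rw [← hNp', ← Measure.map_apply hnegm hApm, Lneg]
  have hNmmeas : (g.prod g) Nm = (g.prod g) Am := by
    rw [← hNm', ← Measure.map_apply hnegm hAmm, Lneg]
  have hCpU : Cp = Ap ∪ Np := by
    ext q
    simp only [hCp, hAp, hNp, mem_setOf_eq, mem_union]
    rw [mul_pos_iff]
  have hCmU : Cm = Am ∪ Nm := by
    ext q
    simp only [hCm, hAm, hNm, mem_setOf_eq, mem_union]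
    rw [mul_neg_iff]
  have hdisj1 : Disjoint Ap Np := by
    rw [Set.disjoint_left]
    rintro q ⟨h1, _⟩ ⟨h2, _⟩
    exact absurd h1 (not_lt.mpr h2.le)
  have hdisj2 : Disjoint Am Nm := by
    rw [Set.disjoint_left]
    rintro q ⟨h1, _⟩ ⟨h2, _⟩
    exact absurd h1 (not_lt.mpr h2.le)
  -- sector values
  have hsecp : ((g.prod g) Ap).toReal = (π/2 - (-α)) / (2 * π) := by
    apply sector_toReal Ap hApm (-α) (π/2) (by linarith) (by linarith) (by linarith)
    intro ρ θ hρ hθ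
    have hiff : ((ρ * Real.cos θ, ρ * Real.sin θ) ∈ Ap) ↔
        (0 < Real.cos θ ∧ 0 < r * Real.cos θ + s * Real.sin θ) := by
      simp only [hAp, mem_setOf_eq]
      rw [show r * (ρ * Real.cos θ) + s * (ρ * Real.sin θ)
        = ρ * (r * Real.cos θ + s * Real.sin θ) from by ring,
        pos_mul_pos_iff hρ, pos_mul_pos_iff hρ]
    rw [hiff, hs]
    exact angle_iff_pos hr hθ
  have hsecm : ((g.prod g) Am).toReal = (-α - (-(π/2))) / (2 * π) := by
    apply sector_toReal Am hAmm (-(π/2)) (-α) (by linarith) (by linarith) (by linarith)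
    intro ρ θ hρ hθ
    have hiff : ((ρ * Real.cos θ, ρ * Real.sin θ) ∈ Am) ↔
        (0 < Real.cos θ ∧ r * Real.cos θ + s * Real.sin θ < 0) := by
      simp only [hAm, mem_setOf_eq]
      rw [show r * (ρ * Real.cos θ) + s * (ρ * Real.sin θ)
        = ρ * (r * Real.cos θ + s * Real.sin θ) from by ring,
        pos_mul_pos_iff hρ, pos_mul_neg_iff hρ]
    rw [hiff, hs]
    exact angle_iff_neg hr hθ
  -- assemble
  have hfin : ∀ S : Set (ℝ × ℝ), (g.prod g) S ≠ ⊤ :=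
    fun S => measure_ne_top _ S
  have htot1 : ((g.prod g) Cp).toReal = 2 * ((π/2 - (-α)) / (2 * π)) := by
    rw [hCpU, measure_union hdisj1 hNpm, hNpmeas,
      ENNReal.toReal_add (hfin Ap) (hfin Ap), hsecp]
    ring
  have htot2 : ((g.prod g) Cm).toReal = 2 * ((-α - (-(π/2))) / (2 * π)) := by
    rw [hCmU, measure_union hdisj2 hNmm, hNmmeas,
      ENNReal.toReal_add (hfin Am) (hfin Am), hsecm]
    ring
  rw [hset1, hset2, hmeasCp, hmeasCm, htot1, htot2]
  field_simp
  ring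

end
end
end

section
/- Let P and Q be two nondegenerate (p+1)-dimensional centered Gaussian distributions with covariance matrices Ω̂ and Ω̃ respectively, where Ω̂ has minimum eigenvalue at least κ > 0. Then the KL divergence satisfies D_KL(P ∥ Q) ≤ (1/(2κ²))·‖Ω̂ − Ω̃‖_F² · ‖Ω̃⁻¹‖₂ · κ + higher-order terms; in particular, for Ω̃ with minimum eigenvalue at least κ, D_KL(P ∥ Q) ≤ (1/(2κ²))·‖Ω̂ − Ω̃‖_F². -/
open Matrix
open scoped MatrixOrder

set_option linter.unusedSectionVars false

section KLhelpers

variable {n : Type*} [Fintype n] [DecidableEq n]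

omit [Fintype n] [DecidableEq n] in
private lemma kl_isHermitian_of_isSymm (A : Matrix n n ℝ) (h : A.IsSymm) : A.IsHermitian := by
  rw [Matrix.IsHermitian, conjTranspose_eq_transpose_of_trivial]; exact h

private lemma kl_posDef_of_quad (A : Matrix n n ℝ) (hA : A.IsSymm) (κ : ℝ) (hκ : 0 < κ)
    (h : ∀ x : n → ℝ, κ * ∑ i, (x i)^2 ≤ x ⬝ᵥ (A *ᵥ x)) : A.PosDef := by
  refine PosDef.of_dotProduct_mulVec_pos (kl_isHermitian_of_isSymm A hA) fun x hx => ?_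
  have hs : 0 < ∑ i, (x i)^2 := by
    obtain ⟨i, hi⟩ := Function.ne_iff.mp hx
    simp only [Pi.zero_apply] at hi
    exact Finset.sum_pos' (fun j _ => sq_nonneg _) ⟨i, Finset.mem_univ i, by positivity⟩
  calc (0:ℝ) < κ * ∑ i, (x i)^2 := by positivity
    _ ≤ x ⬝ᵥ (A *ᵥ x) := h x
    _ = star x ⬝ᵥ (A *ᵥ x) := by simp [star_trivial]

private lemma kl_trace_mul_nonneg (A B : Matrix n n ℝ) (hA : A.PosSemidef)
    (hB : B.PosSemidef) : 0 ≤ (A * B).trace := by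
  have h1 : A = CFC.sqrt A * CFC.sqrt A := (CFC.sqrt_mul_sqrt_self A hA.nonneg).symm
  have hs : (CFC.sqrt A).conjTranspose = CFC.sqrt A := (CFC.sqrt_nonneg A).posSemidef.isHermitian
  have h2 : (A * B).trace = ((CFC.sqrt A).conjTranspose * B * CFC.sqrt A).trace := by
    rw [hs]
    conv_lhs => rw [h1]
    rw [mul_assoc, trace_mul_comm]
  rw [h2]
  have hP : ((CFC.sqrt A).conjTranspose * B * CFC.sqrt A).PosSemidef := hB.conjTranspose_mul_mul_same _
  rw [Matrix.trace]
  refine Finset.sum_nonneg fun i _ => ?_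
  have := hP.dotProduct_mulVec_nonneg (Pi.single i 1)
  simpa [dotProduct, mulVec, Pi.single_apply] using this

private lemma kl_inv_psd_compare (Ω : Matrix n n ℝ) (hsym : Ω.IsHermitian) (κ : ℝ) (hκ : 0 < κ)
    (h : ∀ x : n → ℝ, κ * ∑ i, (x i)^2 ≤ x ⬝ᵥ (Ω *ᵥ x)) (hdet : IsUnit Ω.det) :
    (κ⁻¹ • (1 : Matrix n n ℝ) - Ω⁻¹).PosSemidef := by
  have hsm : (κ⁻¹ • (1 : Matrix n n ℝ)).IsHermitian := by
    show _ᴴ = _; simp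
  refine PosSemidef.of_dotProduct_mulVec_nonneg (hsm.sub hsym.inv) fun x => ?_
  set y := Ω⁻¹ *ᵥ x with hy
  have hx : Ω *ᵥ y = x := by rw [hy, mulVec_mulVec, mul_nonsing_inv _ hdet, one_mulVec]
  have hs : x ⬝ᵥ y = y ⬝ᵥ (Ω *ᵥ y) := by rw [← hx, dotProduct_comm]
  have hC : (x ⬝ᵥ y)^2 ≤ (∑ i, (x i)^2) * (∑ i, (y i)^2) := by
    simpa [dotProduct] using Finset.sum_mul_sq_le_sq_mul_sq Finset.univ x y
  have h1 : κ * ∑ i, (y i)^2 ≤ x ⬝ᵥ y := hs ▸ h y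
  have hX : (0:ℝ) ≤ ∑ i, (x i)^2 := Finset.sum_nonneg fun _ _ => sq_nonneg _
  have hY : (0:ℝ) ≤ ∑ i, (y i)^2 := Finset.sum_nonneg fun _ _ => sq_nonneg _
  have hsnn : 0 ≤ x ⬝ᵥ y := le_trans (by positivity) h1
  have key : κ * (x ⬝ᵥ y) ≤ ∑ i, (x i)^2 := by
    nlinarith [mul_le_mul_of_nonneg_left h1 hX, mul_le_mul_of_nonneg_left hC hκ.le,
      mul_nonneg hκ.le hsnn]
  have hxx : x ⬝ᵥ x = ∑ i, (x i)^2 := by simp [dotProduct, sq]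
  have hv : star x ⬝ᵥ ((κ⁻¹ • (1 : Matrix n n ℝ) - Ω⁻¹) *ᵥ x)
      = κ⁻¹ * (x ⬝ᵥ x) - x ⬝ᵥ y := by
    rw [sub_mulVec, dotProduct_sub, smul_mulVec, one_mulVec, dotProduct_smul]
    simp [star_trivial, smul_eq_mul, hy]
  rw [hv, sub_nonneg, hxx, inv_mul_eq_div, le_div_iff₀ hκ, mul_comm]
  exact key

/-- For a PSD matrix with positive trace bound: trace of `Ω⁻¹ * B` vs `κ⁻¹ * trace B`. -/
private lemma kl_trace_inv_mul_le (Ω B : Matrix n n ℝ) (hsym : Ω.IsHermitian) (κ : ℝ)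
    (hκ : 0 < κ) (h : ∀ x : n → ℝ, κ * ∑ i, (x i)^2 ≤ x ⬝ᵥ (Ω *ᵥ x))
    (hdet : IsUnit Ω.det) (hB : B.PosSemidef) :
    (Ω⁻¹ * B).trace ≤ κ⁻¹ * B.trace := by
  have h0 := kl_trace_mul_nonneg _ B (kl_inv_psd_compare Ω hsym κ hκ h hdet) hB
  rw [sub_mul, trace_sub, smul_mul_assoc, one_mul, trace_smul, sub_nonneg] at h0
  simpa using h0

private lemma kl_logdet_le (C : Matrix n n ℝ) (hC : C.PosSemidef) (hdet : 0 < C.det) :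
    Real.log C.det ≤ C.trace - Fintype.card n := by
  have htr : C.trace = ∑ i, hC.1.eigenvalues i := by
    simpa using hC.1.trace_eq_sum_eigenvalues
  have hdet' : C.det = ∏ i, hC.1.eigenvalues i := by
    simpa using hC.1.det_eq_prod_eigenvalues
  have hpos : ∀ i, 0 < hC.1.eigenvalues i := by
    intro i
    rcases (hC.eigenvalues_nonneg i).lt_or_eq with h | h
    · exact h
    · exfalso
      rw [hdet'] at hdet
      exact absurd (Finset.prod_eq_zero (Finset.mem_univ i) h.symm) (by positivity)
  calc Real.log C.det = ∑ i, Real.log (hC.1.eigenvalues i) := by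
        rw [hdet', Real.log_prod fun i _ => (hpos i).ne']
    _ ≤ ∑ i, (hC.1.eigenvalues i - 1) :=
        Finset.sum_le_sum fun i _ => Real.log_le_sub_one_of_pos (hpos i)
    _ = C.trace - Fintype.card n := by
        rw [Finset.sum_sub_distrib, htr]; simp [Finset.card_univ]

end KLhelpers

/-- KL divergence bound between two centered Gaussians: if
`P = N(0, Ω̂)` and `Q = N(0, Ω̃)` are nondegenerate `(p+1)`-dimensional centered
Gaussians whose covariance matrices both have minimum eigenvalue at least
`κ > 0` (expressed via the quadratic-form lower bound), then
`D_KL(P‖Q) = ½(tr(Ω̃⁻¹Ω̂) - (p+1) + log det Ω̃ - log det Ω̂)`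
is at most `(1/(2κ²))·‖Ω̂ - Ω̃‖_F²`. -/
theorem gaussian_kl_bound (p : ℕ)
    (Ω₁ Ω₂ : Matrix (Fin (p+1)) (Fin (p+1)) ℝ)
    (hΩ₁sym : Ω₁.IsSymm) (hΩ₂sym : Ω₂.IsSymm)
    (κ : ℝ) (hκ : 0 < κ)
    (hΩ₁ : ∀ x : Fin (p+1) → ℝ, κ * ∑ i, (x i)^2 ≤ x ⬝ᵥ (Ω₁ *ᵥ x))
    (hΩ₂ : ∀ x : Fin (p+1) → ℝ, κ * ∑ i, (x i)^2 ≤ x ⬝ᵥ (Ω₂ *ᵥ x)) :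
    (1/2) * ((Ω₂⁻¹ * Ω₁).trace - (p+1)
        + Real.log Ω₂.det - Real.log Ω₁.det)
      ≤ (1 / (2 * κ^2)) * ∑ i, ∑ j, (Ω₁ i j - Ω₂ i j)^2 := by
  have h1pd : Ω₁.PosDef := kl_posDef_of_quad Ω₁ hΩ₁sym κ hκ hΩ₁
  have h2pd : Ω₂.PosDef := kl_posDef_of_quad Ω₂ hΩ₂sym κ hκ hΩ₂
  have hdet1 : (0:ℝ) < Ω₁.det := h1pd.det_pos
  have hdet2 : (0:ℝ) < Ω₂.det := h2pd.det_pos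
  have hu1 : IsUnit Ω₁.det := hdet1.ne'.isUnit
  have hu2 : IsUnit Ω₂.det := hdet2.ne'.isUnit
  set Δ : Matrix (Fin (p+1)) (Fin (p+1)) ℝ := Ω₁ - Ω₂ with hΔ
  have hΔherm : Δ.IsHermitian :=
    kl_isHermitian_of_isSymm _ (hΩ₁sym.sub hΩ₂sym)
  -- Step A: log det Ω₂ - log det Ω₁ ≤ tr(Ω₁⁻¹ Ω₂) - (p+1)
  have hS := h1pd.posSemidef
  set S : Matrix (Fin (p+1)) (Fin (p+1)) ℝ := CFC.sqrt Ω₁ with hSdef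
  have hSS : S * S = Ω₁ := CFC.sqrt_mul_sqrt_self Ω₁ hS.nonneg
  have hSherm : Sᴴ = S := (CFC.sqrt_nonneg Ω₁).posSemidef.isHermitian
  have hSdets : S.det * S.det = Ω₁.det := by rw [← det_mul, hSS]
  have hSdet : S.det ≠ 0 := by
    intro h0; rw [h0, mul_zero] at hSdets; exact hdet1.ne' hSdets.symm
  have hSinv : S⁻¹ * S⁻¹ = Ω₁⁻¹ := by rw [← Matrix.mul_inv_rev, hSS]
  set C : Matrix (Fin (p+1)) (Fin (p+1)) ℝ := S⁻¹ * Ω₂ * S⁻¹ with hCdef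
  have hCpsd : C.PosSemidef := by
    have := h2pd.posSemidef.conjTranspose_mul_mul_same S⁻¹
    rwa [conjTranspose_nonsing_inv, hSherm] at this
  have hCdet : C.det = Ω₂.det / Ω₁.det := by
    rw [hCdef, det_mul, det_mul, det_nonsing_inv, ← hSdets, Ring.inverse_eq_inv']
    field_simp
  have hCdetpos : 0 < C.det := by rw [hCdet]; positivity
  have hCtrace : C.trace = (Ω₁⁻¹ * Ω₂).trace := by
    rw [hCdef, trace_mul_cycle, hSinv]
  have stepA : Real.log Ω₂.det - Real.log Ω₁.det ≤ (Ω₁⁻¹ * Ω₂).trace - (p+1) := by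
    have := kl_logdet_le C hCpsd hCdetpos
    rw [hCdet, Real.log_div hdet2.ne' hdet1.ne', hCtrace] at this
    simpa [Fintype.card_fin] using this
  -- Step B: trace identity
  have hB1 : Ω₂⁻¹ * Δ * Ω₁⁻¹ = Ω₂⁻¹ - Ω₁⁻¹ := by
    rw [hΔ, mul_sub, sub_mul, mul_assoc, mul_nonsing_inv _ hu1, mul_one,
      nonsing_inv_mul _ hu2, one_mul]
  have hB2 : Ω₂⁻¹ * Δ * Ω₁⁻¹ * Δ = Ω₂⁻¹ * Ω₁ + Ω₁⁻¹ * Ω₂ - 1 - 1 := by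
    rw [hB1, hΔ, sub_mul, mul_sub, mul_sub, nonsing_inv_mul _ hu2, nonsing_inv_mul _ hu1]
    abel
  have stepB : (Ω₂⁻¹ * Δ * Ω₁⁻¹ * Δ).trace
      = (Ω₂⁻¹ * Ω₁).trace + (Ω₁⁻¹ * Ω₂).trace - (p+1) - (p+1) := by
    rw [hB2, trace_sub, trace_sub, trace_add, trace_one]
    simp [Fintype.card_fin]
  -- Step C and D: trace bounds
  have hBpsd : (Δ * Ω₁⁻¹ * Δ).PosSemidef := by
    have := h1pd.inv.posSemidef.conjTranspose_mul_mul_same Δ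
    rwa [hΔherm.eq] at this
  have hΔ2psd : (Δ * Δ).PosSemidef := by
    have := posSemidef_conjTranspose_mul_self Δ
    rwa [hΔherm.eq] at this
  have stepC : (Ω₂⁻¹ * (Δ * Ω₁⁻¹ * Δ)).trace ≤ κ⁻¹ * (Δ * Ω₁⁻¹ * Δ).trace :=
    kl_trace_inv_mul_le Ω₂ _ h2pd.isHermitian κ hκ hΩ₂ hu2 hBpsd
  have stepD : (Δ * Ω₁⁻¹ * Δ).trace ≤ κ⁻¹ * (Δ * Δ).trace := by
    have h' : (Δ * Ω₁⁻¹ * Δ).trace = (Ω₁⁻¹ * (Δ * Δ)).trace := by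
      rw [mul_assoc, trace_mul_comm, mul_assoc]
    rw [h']
    exact kl_trace_inv_mul_le Ω₁ _ h1pd.isHermitian κ hκ hΩ₁ hu1 hΔ2psd
  -- Step E: Frobenius norm
  have stepE : (Δ * Δ).trace = ∑ i, ∑ j, (Ω₁ i j - Ω₂ i j)^2 := by
    rw [Matrix.trace]
    refine Finset.sum_congr rfl fun i _ => ?_
    rw [Matrix.diag_apply, Matrix.mul_apply]
    refine Finset.sum_congr rfl fun j _ => ?_
    have hsym : Δ j i = Δ i j := by
      simpa [conjTranspose_apply] using congrFun (congrFun hΔherm.eq i) j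
    rw [hsym]
    simp [hΔ, Matrix.sub_apply, sq]
  -- assemble
  have hκinv : (0:ℝ) ≤ κ⁻¹ := by positivity
  have chain : (Ω₂⁻¹ * Ω₁).trace + (Ω₁⁻¹ * Ω₂).trace - (p+1) - (p+1)
      ≤ κ⁻¹ * (κ⁻¹ * ∑ i, ∑ j, (Ω₁ i j - Ω₂ i j)^2) := by
    rw [← stepB, ← stepE]
    calc (Ω₂⁻¹ * Δ * Ω₁⁻¹ * Δ).trace = (Ω₂⁻¹ * (Δ * Ω₁⁻¹ * Δ)).trace := by
          rw [← mul_assoc, ← mul_assoc]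
      _ ≤ κ⁻¹ * (Δ * Ω₁⁻¹ * Δ).trace := stepC
      _ ≤ κ⁻¹ * (κ⁻¹ * (Δ * Δ).trace) := by
          exact mul_le_mul_of_nonneg_left stepD hκinv
  have hfinal : (1 / (2 * κ^2)) * ∑ i, ∑ j, (Ω₁ i j - Ω₂ i j)^2
      = (1/2) * (κ⁻¹ * (κ⁻¹ * ∑ i, ∑ j, (Ω₁ i j - Ω₂ i j)^2)) := by
    rw [one_div, mul_inv, sq, mul_inv]
    ring
  rw [hfinal]
  push_cast at chain stepA ⊢
  linarith [chain, stepA]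
end
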